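/- Let β > 1 be a real number and let δ be the smallest positive integer such that ⌊β⌋/β^{δ−1} + ⌊β⌋/β^{δ} ≤ 1 − {β}, where {β} denotes the fractional part of β. Then there exists a function φ from finite words over A_β = {0, …, ⌈β⌉−1} to {0, …, ⌊β⌋} such that for every sequence (x_j)_{j≥1} ∈ A_β^ℕ with 0 ≤ Σ_{j≥1} x_j β^{−j} < 1/(β+1), the sequence defined by y_j = φ(x_1x_2⋯x_{δ+j}) satisfies Σ_{j≥1} x_j β^{−j} = Σ_{j≥1} y_j(−β)^{−j}. In other words, the conversion from base β to base −β is computable by an on-line algorithm with delay δ. -/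

import Mathlib

/-- The condition `⌊β⌋/β^(δ-1) + ⌊β⌋/β^δ ≤ 1 - {β}` defining the delay of the on-line
conversion algorithm. -/
noncomputable def DelayCond (β : ℝ) (δ : ℕ) : Prop :=
  (⌊β⌋ : ℝ) / β ^ (δ - 1) + (⌊β⌋ : ℝ) / β ^ δ ≤ 1 - Int.fract β

namespace OnlineConv

/-- Uncertainty radius. -/
noncomputable def eps (β : ℝ) (δ : ℕ) : ℝ := ((⌈β⌉ : ℝ) - 1) / (β ^ (δ + 1) * (β - 1))

/-- Right endpoint of the representable interval in base `-β`. -/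
noncomputable def Rr (β : ℝ) : ℝ := (⌊β⌋ : ℝ) / (β ^ 2 - 1)

/-- Left endpoint of the representable interval in base `-β`. -/
noncomputable def Ll (β : ℝ) : ℝ := -((⌊β⌋ : ℝ) * β) / (β ^ 2 - 1)

/-- Digit selection function. -/
noncomputable def sel (β : ℝ) (δ : ℕ) (w : ℝ) : ℤ :=
  min ⌊β⌋ (max 0 ⌈-β * w + β * eps β δ - Rr β⌉)

/-- Approximate scaled remainders computed from the known prefix of the input. -/
noncomputable def zhat (β : ℝ) (δ : ℕ) (x : ℕ → ℤ) : ℕ → ℝ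
  | 0 => ∑ i ∈ Finset.range (δ + 1), (x i : ℝ) * (β⁻¹) ^ (i + 1)
  | j + 1 => -β * zhat β δ x j - (sel β δ (zhat β δ x j) : ℝ)
      + (-1 : ℝ) ^ (j + 1) * (x (δ + 1 + j) : ℝ) * (β⁻¹) ^ (δ + 1)

/-- The on-line conversion function on finite words. -/
noncomputable def phi (β : ℝ) (δ : ℕ) (u : List ℤ) : ℤ :=
  if δ + 1 ≤ u.length then sel β δ (zhat β δ (fun i => u.getD i 0) (u.length - (δ + 1))) else 0

lemma zhat_congr (β : ℝ) (δ : ℕ) {x x' : ℕ → ℤ} :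
    ∀ j, (∀ i < δ + 1 + j, x i = x' i) → zhat β δ x j = zhat β δ x' j := by
  intro j
  induction j with
  | zero =>
    intro h
    simp only [zhat]
    refine Finset.sum_congr rfl fun i hi => ?_
    rw [h i (by have := Finset.mem_range.mp hi; omega)]
  | succ j ih =>
    intro h
    simp only [zhat]
    rw [ih (fun i hi => h i (by omega)), h (δ + 1 + j) (by omega)]

lemma key (β : ℝ) (hβ : 1 < β) (δ : ℕ) (hδpos : 0 < δ) (hδ : DelayCond β δ) :
    1 + 2 * β * eps β δ ≤ Rr β - Ll β := by
  have hβ0 : (0:ℝ) < β := lt_trans one_pos hβ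
  have ha1 : (1:ℝ) ≤ (⌊β⌋ : ℝ) := by exact_mod_cast Int.le_floor.mpr (by exact_mod_cast hβ.le)
  have hd : ((⌈β⌉ : ℝ) - 1) ≤ (⌊β⌋ : ℝ) := by
    have h := Int.ceil_le_floor_add_one β
    have : ((⌈β⌉ : ℝ)) ≤ (⌊β⌋ : ℝ) + 1 := by exact_mod_cast h
    linarith
  have hpow : (0:ℝ) < β ^ δ := pow_pos hβ0 δ
  have hbm1 : (0:ℝ) < β - 1 := by linarith
  have hb2 : (0:ℝ) < β ^ 2 - 1 := by nlinarith
  have hps : β ^ (δ - 1) * β = β ^ δ := by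
    rw [← pow_succ]; congr 1; omega
  have hpow1 : (0:ℝ) < β ^ (δ - 1) := pow_pos hβ0 _
  have hδ' : (⌊β⌋ : ℝ) * β + (⌊β⌋ : ℝ) ≤ (1 - β + (⌊β⌋ : ℝ)) * β ^ δ := by
    unfold DelayCond at hδ
    rw [Int.fract] at hδ
    have h1 : (⌊β⌋ : ℝ) / β ^ (δ - 1) = (⌊β⌋ : ℝ) * β / β ^ δ := by
      rw [← hps]; field_simp
    rw [h1] at hδ
    rw [← add_div, div_le_iff₀ hpow] at hδ
    linarith
  have t : (β - 1) * β ^ δ + 2 * ((⌈β⌉ : ℝ) - 1) ≤ (⌊β⌋ : ℝ) * β ^ δ := by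
    nlinarith [hδ', hd, ha1, hβ.le, hpow]
  have hPb : β ^ (δ + 1) = β ^ δ * β := pow_succ β δ
  have e1 : 1 + 2 * β * eps β δ
      = (β ^ δ * (β - 1) + 2 * ((⌈β⌉ : ℝ) - 1)) / (β ^ δ * (β - 1)) := by
    unfold eps; rw [hPb]; field_simp
  have e2 : Rr β - Ll β = (⌊β⌋ : ℝ) / (β - 1) := by
    unfold Rr Ll
    rw [div_sub_div _ _ (ne_of_gt hb2) (ne_of_gt hb2), div_eq_div_iff (by positivity) (by positivity)]
    ring
  rw [e1, e2, div_le_div_iff₀ (by positivity) hbm1]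
  nlinarith [t, hbm1, hpow]

lemma step (β : ℝ) (hβ : 1 < β) (δ : ℕ)
    (hkey : 1 + 2 * β * eps β δ ≤ Rr β - Ll β)
    (z w : ℝ) (hz1 : Ll β ≤ z) (hz2 : z ≤ Rr β) (hzw : |z - w| ≤ eps β δ) :
    Ll β ≤ -β * z - ((sel β δ w : ℤ) : ℝ) ∧ -β * z - ((sel β δ w : ℤ) : ℝ) ≤ Rr β := by
  have hβ0 : (0:ℝ) < β := lt_trans one_pos hβ
  have ha0 : (0:ℤ) ≤ ⌊β⌋ := Int.floor_nonneg.mpr (by linarith)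
  have hb2 : (0:ℝ) < β ^ 2 - 1 := by nlinarith
  set a : ℝ := ((⌊β⌋ : ℤ) : ℝ) with ha
  set ε : ℝ := eps β δ
  set p : ℝ := -β * w + β * ε - Rr β with hp
  have id1 : -β * Rr β = Ll β := by unfold Rr Ll; ring
  have id2 : -β * Ll β = Rr β + a := by
    unfold Rr Ll
    field_simp
    ring
  have h1 : Ll β ≤ -β * z := by
    rw [← id1]; nlinarith
  have h2 : -β * z ≤ Rr β + a := by
    rw [← id2]; nlinarith
  have habs := abs_le.mp hzw
  have h3 : -β * z ≤ -β * w + β * ε := by nlinarith [habs.1, habs.2]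
  have h4 : -β * w - β * ε ≤ -β * z := by nlinarith [habs.1, habs.2]
  have hpceil : (p : ℝ) ≤ (⌈p⌉ : ℝ) := Int.le_ceil p
  have hpceil2 : ((⌈p⌉ : ℤ) : ℝ) < p + 1 := Int.ceil_lt_add_one p
  rcases lt_or_ge ⌈p⌉ 0 with hc | hc
  · have hsel : sel β δ w = 0 := by
      unfold sel
      rw [max_eq_left hc.le, min_eq_right ha0]
    rw [hsel]
    push_cast
    constructor
    · linarith
    · have : (p : ℝ) < 0 := lt_of_le_of_lt hpceil (by exact_mod_cast hc)
      rw [hp] at this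
      linarith
  · rcases le_or_gt ⌈p⌉ ⌊β⌋ with hc2 | hc2
    · have hsel : sel β δ w = ⌈p⌉ := by
        unfold sel
        rw [max_eq_right hc, min_eq_right hc2]
      rw [hsel]
      constructor
      · have : ((⌈p⌉ : ℤ) : ℝ) < p + 1 := hpceil2
        rw [hp] at this hpceil ⊢
        linarith
      · rw [hp] at hpceil ⊢
        linarith
    · have hsel : sel β δ w = ⌊β⌋ := by
        unfold sel
        rw [max_eq_right hc, min_eq_left hc2.le]
      rw [hsel]
      constructor
      · have hpgt : a < p := by
          have : ((⌊β⌋ : ℤ) : ℝ) + 1 ≤ ((⌈p⌉ : ℤ) : ℝ) := by exact_mod_cast hc2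
          linarith
        rw [hp] at hpgt
        rw [← ha]
        linarith
      · rw [← ha]
        linarith

end OnlineConv

/-- There is a conversion from base `β` to base `-β` computable by an on-line algorithm
with delay `δ`, where `δ` is the smallest positive integer satisfying
`⌊β⌋/β^(δ-1) + ⌊β⌋/β^δ ≤ 1 - {β}`: there is a function `φ` from finite words over
`A_β = {0,…,⌈β⌉-1}` to digits in `{0,…,⌊β⌋}` such that for any input `(x_j)_{j≥1}` over
`A_β` whose value `x = Σ_{j≥1} x_j β^{-j}` lies in `[0, 1/(β+1))`, the output digits
`y_j = φ(x_1 ⋯ x_{δ+j})` satisfy `Σ_{j≥1} x_j β^{-j} = Σ_{j≥1} y_j (-β)^{-j}`.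
(Here `x j` is the digit `x_{j+1}`.) -/
theorem online_conversion_base_beta_to_neg_beta (β : ℝ) (hβ : 1 < β)
    (δ : ℕ) (hδpos : 0 < δ) (hδ : DelayCond β δ)
    (hδmin : ∀ δ' : ℕ, 0 < δ' → DelayCond β δ' → δ ≤ δ') :
    ∃ φ : List ℤ → ℤ, (∀ u, 0 ≤ φ u ∧ φ u ≤ ⌊β⌋) ∧
      ∀ x : ℕ → ℤ, (∀ j, 0 ≤ x j ∧ x j ≤ ⌈β⌉ - 1) →
        0 ≤ ∑' j : ℕ, (x j : ℝ) * (β⁻¹) ^ (j + 1) →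
        (∑' j : ℕ, (x j : ℝ) * (β⁻¹) ^ (j + 1)) < 1 / (β + 1) →
        ∑' j : ℕ, (x j : ℝ) * (β⁻¹) ^ (j + 1) =
          ∑' j : ℕ, ((φ ((List.range (δ + j + 1)).map x) : ℝ)) * ((-β)⁻¹) ^ (j + 1) := by
  classical
  open OnlineConv in
  have hβ0 : (0:ℝ) < β := lt_trans one_pos hβ
  have hβne : β ≠ 0 := ne_of_gt hβ0
  have ha0 : (0:ℤ) ≤ ⌊β⌋ := Int.floor_nonneg.mpr (by linarith)
  refine ⟨OnlineConv.phi β δ, ?_, ?_⟩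
  · intro u
    unfold OnlineConv.phi
    split
    · exact ⟨le_min ha0 (le_max_left 0 _), min_le_left _ _⟩
    · exact ⟨le_refl 0, ha0⟩
  · intro x hx hX0 hX1
    set d : ℝ := (⌈β⌉ : ℝ) - 1 with hdd
    have hinv0 : (0:ℝ) < β⁻¹ := inv_pos.mpr hβ0
    have hinv1 : β⁻¹ < 1 := inv_lt_one_of_one_lt₀ hβ
    set g : ℕ → ℝ := fun j => (x j : ℝ) * (β⁻¹) ^ (j + 1) with hg
    set X : ℝ := ∑' j : ℕ, g j with hX
    have hgnn : ∀ j, 0 ≤ g j := fun j =>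
      mul_nonneg (by exact_mod_cast (hx j).1) (by positivity)
    have hgle : ∀ j, g j ≤ d * (β⁻¹) ^ (j + 1) := by
      intro j
      have : (x j : ℝ) ≤ d := by
        rw [hdd]; push_cast; exact_mod_cast (hx j).2
      exact mul_le_mul_of_nonneg_right this (by positivity)
    have hgeo : Summable (fun n : ℕ => (β⁻¹) ^ n) :=
      summable_geometric_of_lt_one hinv0.le hinv1
    have hdg : Summable (fun j : ℕ => d * (β⁻¹) ^ (j + 1)) := by
      have := (hgeo.mul_left d).mul_right β⁻¹
      simpa [pow_succ, mul_assoc] using this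
    have hgsum : Summable g := Summable.of_nonneg_of_le hgnn hgle hdg
    -- tail estimate
    have htail : ∀ n : ℕ, 0 ≤ X - ∑ i ∈ Finset.range n, g i ∧
        X - ∑ i ∈ Finset.range n, g i ≤ d / (β ^ n * (β - 1)) := by
      intro n
      have hshift : Summable (fun k : ℕ => g (k + n)) := (summable_nat_add_iff n).mpr hgsum
      have heq : X - ∑ i ∈ Finset.range n, g i = ∑' k : ℕ, g (k + n) := by
        rw [hX, ← Summable.sum_add_tsum_nat_add n hgsum]; ring
      have hb1 : Summable (fun k : ℕ => d * (β⁻¹) ^ (n + 1) * (β⁻¹) ^ k) :=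
        hgeo.mul_left _
      have hle : ∀ k, g (k + n) ≤ d * (β⁻¹) ^ (n + 1) * (β⁻¹) ^ k := by
        intro k
        refine (hgle (k + n)).trans_eq ?_
        rw [mul_assoc, ← pow_add]
        congr 2
        omega
      have hb2 : ∑' k : ℕ, d * (β⁻¹) ^ (n + 1) * (β⁻¹) ^ k
          = d / (β ^ n * (β - 1)) := by
        rw [tsum_mul_left, tsum_geometric_of_lt_one hinv0.le hinv1]
        have hβm : (0:ℝ) < β - 1 := by linarith
        have h1 : (1 - β⁻¹)⁻¹ = β / (β - 1) := by
          rw [inv_eq_iff_eq_inv, eq_comm, inv_div]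
          field_simp
        rw [h1, eq_div_iff (by positivity), pow_succ, inv_pow]
        field_simp
      constructor
      · rw [heq]; exact tsum_nonneg fun k => hgnn _
      · rw [heq, ← hb2]; exact Summable.tsum_le_tsum hle hshift hb1
    -- output digits
    set y : ℕ → ℤ := fun j => OnlineConv.sel β δ (OnlineConv.zhat β δ x j) with hy
    have hphi : ∀ j : ℕ, OnlineConv.phi β δ ((List.range (δ + j + 1)).map x) = y j := by
      intro j
      unfold OnlineConv.phi
      simp only [List.length_map, List.length_range]
      rw [if_pos (by omega : δ + 1 ≤ δ + j + 1)]
      have hj : δ + j + 1 - (δ + 1) = j := by omega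
      rw [hj, hy]
      congr 1
      refine OnlineConv.zhat_congr β δ j ?_
      intro i hi
      rw [List.getD_eq_getElem?_getD]
      simp [List.getElem?_map, List.getElem?_range, show i < δ + j + 1 by omega]
    -- the scaled remainder identity
    set c : ℝ := (-β)⁻¹ with hc
    have hnegβ : (-β) ≠ 0 := by simpa using hβne
    have hc1 : -β * c = 1 := mul_inv_cancel₀ hnegβ
    have hcneg : c = -β⁻¹ := by rw [hc, inv_neg]
    have P : ∀ j : ℕ, OnlineConv.zhat β δ x j * c ^ j =
        (∑ i ∈ Finset.range (δ + 1 + j), g i) -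
          ∑ i ∈ Finset.range j, (y i : ℝ) * c ^ (i + 1) := by
      intro j
      induction j with
      | zero =>
        simp only [OnlineConv.zhat, pow_zero, mul_one, Finset.sum_range_zero, sub_zero,
          Nat.add_zero]
        rfl
      | succ j ih =>
        have hs1 : (∑ i ∈ Finset.range (δ + 1 + (j + 1)), g i)
            = (∑ i ∈ Finset.range (δ + 1 + j), g i) + g (δ + 1 + j) := by
          rw [show δ + 1 + (j + 1) = (δ + 1 + j) + 1 by omega, Finset.sum_range_succ]
        have hs2 : (∑ i ∈ Finset.range (j + 1), (y i : ℝ) * c ^ (i + 1))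
            = (∑ i ∈ Finset.range j, (y i : ℝ) * c ^ (i + 1)) + (y j : ℝ) * c ^ (j + 1) := by
          rw [Finset.sum_range_succ]
        have hm : (-1 : ℝ) ^ (j + 1) * (x (δ + 1 + j) : ℝ) * (β⁻¹) ^ (δ + 1) * c ^ (j + 1)
            = g (δ + 1 + j) := by
          have h2 : ((-1:ℝ)) ^ (j + 1) * ((-1:ℝ)) ^ (j + 1) = 1 := by
            rw [← pow_add, show (j+1) + (j+1) = 2 * (j+1) by ring, pow_mul]
            norm_num
          have h3 : (β⁻¹) ^ (δ + 1) * (β⁻¹) ^ (j + 1) = (β⁻¹) ^ ((δ + 1 + j) + 1) := by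
            rw [← pow_add]; congr 1
          rw [hcneg, show (-β⁻¹ : ℝ) = (-1) * β⁻¹ by ring, mul_pow, hg]
          simp only []
          linear_combination ((x (δ + 1 + j) : ℝ) * ((β⁻¹) ^ (δ + 1) * (β⁻¹) ^ (j + 1))) * h2
            + ((x (δ + 1 + j) : ℝ)) * h3
        simp only [OnlineConv.zhat]
        rw [hs1, hs2, pow_succ c j]
        have hyj : ((y j : ℤ) : ℝ) = ((OnlineConv.sel β δ (OnlineConv.zhat β δ x j) : ℤ) : ℝ) := by
          simp only [hy]
        rw [← hyj]
        linear_combination (-β * c) * ih + hm +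
          ((∑ i ∈ Finset.range (δ + 1 + j), g i) -
            ∑ i ∈ Finset.range j, (y i : ℝ) * c ^ (i + 1)) * hc1
    -- true remainders
    set D : ℕ → ℝ := fun n => X - ∑ i ∈ Finset.range n, (y i : ℝ) * c ^ (i + 1) with hD
    set z : ℕ → ℝ := fun n => (-β) ^ n * D n with hz
    have hbc : ∀ n : ℕ, (-β) ^ n * c ^ n = 1 := by
      intro n
      rw [← mul_pow, hc1, one_pow]
    have hzdiff : ∀ j : ℕ, |z j - OnlineConv.zhat β δ x j| ≤ OnlineConv.eps β δ := by
      intro j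
      have hDj : D j = OnlineConv.zhat β δ x j * c ^ j
          + (X - ∑ i ∈ Finset.range (δ + 1 + j), g i) := by
        have := P j
        simp only [hD]
        linarith
      have hzj : z j - OnlineConv.zhat β δ x j
          = (-β) ^ j * (X - ∑ i ∈ Finset.range (δ + 1 + j), g i) := by
        simp only [hz]
        rw [hDj]
        linear_combination (OnlineConv.zhat β δ x j) * hbc j
      rw [hzj, abs_mul, abs_pow, abs_neg, abs_of_pos hβ0]
      have ht := htail (δ + 1 + j)
      rw [abs_of_nonneg ht.1]
      calc β ^ j * (X - ∑ i ∈ Finset.range (δ + 1 + j), g i)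
          ≤ β ^ j * (d / (β ^ (δ + 1 + j) * (β - 1))) := by
            exact mul_le_mul_of_nonneg_left ht.2 (by positivity)
        _ = OnlineConv.eps β δ := by
            unfold OnlineConv.eps
            rw [← hdd, show δ + 1 + j = (δ + 1) + j by omega, pow_add]
            have hβm : (0:ℝ) < β - 1 := by linarith
            field_simp
    have hzrec : ∀ j : ℕ, z (j + 1) = -β * z j - (y j : ℝ) := by
      intro j
      simp only [hz, hD]
      rw [Finset.sum_range_succ, pow_succ (-β) j]
      linear_combination (-((y j : ℝ))) * hbc (j + 1)
    -- the invariant: true remainders stay in the representable interval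
    have hb2 : (0:ℝ) < β ^ 2 - 1 := by nlinarith
    have ha1 : (0:ℝ) ≤ ((⌊β⌋ : ℤ) : ℝ) := by exact_mod_cast ha0
    have hinv : ∀ j : ℕ, OnlineConv.Ll β ≤ z j ∧ z j ≤ OnlineConv.Rr β := by
      intro j
      induction j with
      | zero =>
        have hz0 : z 0 = X := by simp [hz, hD]
        have hflt : β - 1 < ((⌊β⌋ : ℤ) : ℝ) := by
          have := Int.lt_floor_add_one β; linarith
        constructor
        · rw [hz0]
          unfold OnlineConv.Ll
          have h0 : 0 ≤ (((⌊β⌋ : ℤ) : ℝ) * β) / (β ^ 2 - 1) := by positivity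
          rw [neg_div]
          linarith
        · rw [hz0]
          unfold OnlineConv.Rr
          have h1 : 1 / (β + 1) ≤ ((⌊β⌋ : ℤ) : ℝ) / (β ^ 2 - 1) := by
            rw [div_le_div_iff₀ (by linarith) hb2]
            nlinarith
          linarith
      | succ j ih =>
        rw [hzrec j]
        have hstep := OnlineConv.step β hβ δ (OnlineConv.key β hβ δ hδpos hδ)
          (z j) (OnlineConv.zhat β δ x j) ih.1 ih.2 (hzdiff j)
        simpa only [hy] using hstep
    -- bound on the remainders and convergence
    set M : ℝ := max (-(OnlineConv.Ll β)) (OnlineConv.Rr β) with hM'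
    have hMz : ∀ n, |z n| ≤ M := by
      intro n
      refine abs_le.mpr ⟨?_, ?_⟩
      · have := (hinv n).1
        have h2 : -(OnlineConv.Ll β) ≤ M := le_max_left _ _
        linarith
      · exact (hinv n).2.trans (le_max_right _ _)
    have hMD : ∀ n, |D n| ≤ M * (β⁻¹) ^ n := by
      intro n
      have hDn : D n = c ^ n * z n := by
        calc D n = ((-β) ^ n * c ^ n) * D n := by rw [hbc n]; ring
        _ = c ^ n * z n := by simp only [hz]; ring
      rw [hDn, abs_mul, abs_pow, hc, abs_inv, abs_neg, abs_of_pos hβ0, mul_comm]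
      exact mul_le_mul_of_nonneg_right (hMz n) (by positivity)
    have hDto : Filter.Tendsto D Filter.atTop (nhds 0) := by
      refine squeeze_zero_norm (a := fun n => M * (β⁻¹) ^ n) (fun n => ?_) ?_
      · rw [Real.norm_eq_abs]; exact hMD n
      · have h1 : Filter.Tendsto (fun n : ℕ => (β⁻¹) ^ n) Filter.atTop (nhds 0) :=
          tendsto_pow_atTop_nhds_zero_of_lt_one hinv0.le hinv1
        simpa using h1.const_mul M
    -- summability of the output series
    set f : ℕ → ℝ := fun j => (y j : ℝ) * c ^ (j + 1) with hf
    have hyb : ∀ j, (0:ℤ) ≤ y j ∧ y j ≤ ⌊β⌋ := by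
      intro j
      simp only [hy]
      unfold OnlineConv.sel
      exact ⟨le_min ha0 (le_max_left 0 _), min_le_left _ _⟩
    have hag : Summable (fun j : ℕ => ((⌊β⌋ : ℤ) : ℝ) * (β⁻¹) ^ (j + 1)) := by
      have := (hgeo.mul_left ((⌊β⌋ : ℤ) : ℝ)).mul_right β⁻¹
      simpa [pow_succ, mul_assoc] using this
    have hfnorm : Summable fun j => ‖f j‖ := by
      refine Summable.of_nonneg_of_le (fun j => norm_nonneg _) (fun j => ?_) hag
      rw [Real.norm_eq_abs, hf]
      simp only []
      rw [abs_mul, abs_pow, hc, abs_inv, abs_neg, abs_of_pos hβ0]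
      have h1 : |((y j : ℤ) : ℝ)| ≤ ((⌊β⌋ : ℤ) : ℝ) := by
        rw [abs_of_nonneg (by exact_mod_cast (hyb j).1)]
        exact_mod_cast (hyb j).2
      exact mul_le_mul_of_nonneg_right h1 (by positivity)
    have hpartial : Filter.Tendsto (fun n => ∑ i ∈ Finset.range n, f i)
        Filter.atTop (nhds X) := by
      have hfn : (fun n => ∑ i ∈ Finset.range n, f i) = fun n => X - D n := by
        funext n
        simp only [hD, hf]
        ring
      rw [hfn]
      simpa using Filter.Tendsto.sub (tendsto_const_nhds (x := X)) hDto
    have hHasSum : HasSum f X :=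
      (hasSum_iff_tendsto_nat_of_summable_norm hfnorm).mpr hpartial
    calc X = ∑' j : ℕ, f j := hHasSum.tsum_eq.symm
    _ = ∑' j : ℕ, ((OnlineConv.phi β δ ((List.range (δ + j + 1)).map x) : ℤ) : ℝ) * c ^ (j + 1) := by
      refine tsum_congr fun j => ?_
      rw [hphi j, hf]
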